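/- In the free group F2 = ⟨x, y⟩, for each r ≥ 1 the number of subgroups of index exactly r is N_r where N_1 = 1 and N_r = r·(r!) − ∑_{k=1}^{r−1} ((r−k)!)·N_k; in particular N_r ≥ 1 for all r ≥ 1, so F2 has subgroups of every finite index. -/

import Mathlib

open Equiv

variable {G : Type} [Group G] {α β : Type}

/-- sum over fibers -/
lemma card_eq_sum_card_fiber [Finite α] [Fintype β] (f : α → β) :
    Nat.card α = ∑ b : β, Nat.card {a : α // f a = b} := by
  classical
  cases nonempty_fintype α
  calc Nat.card α = Nat.card (Σ b : β, {a : α // f a = b}) :=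
        Nat.card_congr (Equiv.sigmaFiberEquiv f).symm
    _ = ∑ b : β, Nat.card {a : α // f a = b} := by
        rw [Nat.card_eq_fintype_card, Fintype.card_sigma]
        simp [Nat.card_eq_fintype_card]

/-- fibers of evaluation-at-a on equivs all have the same size -/
def fiberEquivEval [DecidableEq β] (a : α) (b b' : β) :
    {e : α ≃ β // e a = b} ≃ {e : α ≃ β // e a = b'} where
  toFun e := ⟨e.1.trans (Equiv.swap b b'), by simp [e.2]⟩
  invFun e := ⟨e.1.trans (Equiv.swap b' b), by simp [e.2, Equiv.swap_comm]⟩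
  left_inv e := by
    ext x
    simp [Equiv.swap_comm b b', Equiv.swap_apply_self]
  right_inv e := by
    ext x
    simp [Equiv.swap_comm b b', Equiv.swap_apply_self]

lemma card_pointed_equiv [Finite α] [Finite β] {r : ℕ} (hα : Nat.card α = r)
    (hβ : Nat.card β = r) (a : α) (b : β) :
    Nat.card {e : α ≃ β // e a = b} = (r - 1).factorial := by
  classical
  cases nonempty_fintype α; cases nonempty_fintype β
  have hr : 0 < r := by
    rw [← hα]; exact Nat.card_pos_iff.mpr ⟨⟨a⟩, inferInstance⟩
  have hcard : Fintype.card α = Fintype.card β := by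
    rw [← Nat.card_eq_fintype_card, ← Nat.card_eq_fintype_card, hα, hβ]
  have e0 : α ≃ β := Fintype.equivOfCardEq hcard
  have htot : Nat.card (α ≃ β) = r.factorial := by
    rw [Nat.card_eq_fintype_card, Fintype.card_equiv e0, ← Nat.card_eq_fintype_card, hα]
  have hsum := card_eq_sum_card_fiber (fun e : α ≃ β => e a)
  have hfib : ∀ b' : β, Nat.card {e : α ≃ β // e a = b'} = Nat.card {e : α ≃ β // e a = b} :=
    fun b' => Nat.card_congr (fiberEquivEval a b' b)
  rw [htot] at hsum
  simp only [hfib] at hsum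
  rw [Finset.sum_const, Finset.card_univ, ← Nat.card_eq_fintype_card, hβ, smul_eq_mul] at hsum
  obtain ⟨n, rfl⟩ : ∃ n, r = n + 1 := ⟨r - 1, (Nat.succ_pred_eq_of_pos hr).symm⟩
  rw [Nat.factorial_succ] at hsum
  simpa using (Nat.eq_of_mul_eq_mul_left hr hsum).symm

/-- Transitivity of a permutation representation. -/
def IsTransHom (φ : G →* Equiv.Perm α) : Prop := ∀ x y : α, ∃ g : G, φ g x = y

/-- permCongr as a monoid hom -/
def permCongrHom (e : α ≃ β) : Equiv.Perm α →* Equiv.Perm β where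
  toFun σ := (e.symm.trans σ).trans e
  map_one' := by ext x; simp
  map_mul' σ τ := by ext x; simp

@[simp] lemma permCongrHom_apply (e : α ≃ β) (σ : Equiv.Perm α) (x : β) :
    _root_.permCongrHom e σ x = e (σ (e.symm x)) := rfl

/-- transport transitive homs along an equiv of the acted-on types -/
def transHomCongr (e : α ≃ β) :
    {φ : G →* Equiv.Perm α // IsTransHom φ} ≃ {φ : G →* Equiv.Perm β // IsTransHom φ} where
  toFun φ := ⟨(_root_.permCongrHom e).comp φ.1, by
    intro x y
    obtain ⟨g, hg⟩ := φ.2 (e.symm x) (e.symm y)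
    exact ⟨g, by simp [hg]⟩⟩
  invFun φ := ⟨(_root_.permCongrHom e.symm).comp φ.1, by
    intro x y
    obtain ⟨g, hg⟩ := φ.2 (e x) (e y)
    exact ⟨g, by simp [hg]⟩⟩
  left_inv φ := by ext g x <;> simp
  right_inv φ := by ext g x <;> simp

/-- the number of transitive homs F2 → Perm (Fin n) -/
noncomputable def transCount (G : Type) [Group G] (n : ℕ) : ℕ :=
  Nat.card {φ : G →* Equiv.Perm (Fin n) // IsTransHom φ}

instance : Finite (FreeGroup (Fin 2) →* Equiv.Perm (Fin r)) :=
  Finite.of_equiv _ (FreeGroup.lift : (Fin 2 → Equiv.Perm (Fin r)) ≃ _)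

lemma card_homF2 (r : ℕ) :
    Nat.card (FreeGroup (Fin 2) →* Equiv.Perm (Fin r)) = r.factorial ^ 2 := by
  rw [Nat.card_congr (FreeGroup.lift : (Fin 2 → Equiv.Perm (Fin r)) ≃ _).symm]
  simp [Nat.card_fun, Nat.card_eq_fintype_card, sq, Fintype.card_perm]

section StabCorr
variable {r : ℕ} [NeZero r] (K : Subgroup G)

noncomputable def buildHom (e : G ⧸ K ≃ Fin r) : G →* Equiv.Perm (Fin r) :=
  (_root_.permCongrHom e).comp (MulAction.toPermHom G (G ⧸ K))

lemma buildHom_apply (e : G ⧸ K ≃ Fin r) (g : G) (x : Fin r) :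
    buildHom K e g x = e (g • e.symm x) := rfl

def stabOf (φ : G →* Equiv.Perm (Fin r)) : Subgroup G :=
  Subgroup.comap φ (MulAction.stabilizer (Equiv.Perm (Fin r)) (0 : Fin r))

lemma mem_stabOf {φ : G →* Equiv.Perm (Fin r)} {g : G} :
    g ∈ stabOf φ ↔ φ g 0 = 0 := Iff.rfl

noncomputable def toPointed (φ : {φ : G →* Equiv.Perm (Fin r) // IsTransHom φ ∧ stabOf φ = K}) :
    {e : G ⧸ K ≃ Fin r // e ((1 : G) : G ⧸ K) = 0} := by
  refine ⟨Equiv.ofBijective (Quotient.lift (fun g => φ.1 g 0) ?_) ⟨?_, ?_⟩, ?_⟩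
  · intro a b hab
    have hab' : a⁻¹ * b ∈ stabOf φ.1 := φ.2.2.symm ▸ QuotientGroup.leftRel_apply.mp hab
    have : φ.1 b 0 = φ.1 a (φ.1 (a⁻¹ * b) 0) := by
      rw [← Equiv.Perm.mul_apply, ← map_mul, mul_inv_cancel_left]
    simp only [this, mem_stabOf.mp hab']
  · rintro ⟨a⟩ ⟨b⟩ hab
    have hab2 : φ.1 a 0 = φ.1 b 0 := hab
    have : a⁻¹ * b ∈ stabOf φ.1 := by
      rw [mem_stabOf, map_mul, Equiv.Perm.mul_apply, map_inv, ← hab2]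
      simp
    rw [φ.2.2] at this
    exact Quotient.sound (QuotientGroup.leftRel_apply.mpr this)
  · intro x
    obtain ⟨g, hg⟩ := φ.2.1 0 x
    exact ⟨QuotientGroup.mk g, hg⟩
  · show φ.1 1 0 = 0
    simp

lemma toPointed_apply_mk (φ : {φ : G →* Equiv.Perm (Fin r) // IsTransHom φ ∧ stabOf φ = K})
    (g : G) : (toPointed K φ).1 (QuotientGroup.mk g) = φ.1 g 0 := rfl

noncomputable def fiberEquivPointed :
    {φ : G →* Equiv.Perm (Fin r) // IsTransHom φ ∧ stabOf φ = K} ≃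
      {e : G ⧸ K ≃ Fin r // e ((1 : G) : G ⧸ K) = 0} where
  toFun := toPointed K
  invFun e := ⟨buildHom K e.1, by
    constructor
    · intro x y
      obtain ⟨a, ha⟩ := QuotientGroup.mk_surjective (e.1.symm x)
      obtain ⟨b, hb⟩ := QuotientGroup.mk_surjective (e.1.symm y)
      refine ⟨b * a⁻¹, ?_⟩
      rw [buildHom_apply, ← ha, MulAction.Quotient.smul_mk]
      have : (b * a⁻¹) • a = b := by simp [smul_eq_mul, mul_assoc]
      rw [this, hb]
      simp
    · ext g
      rw [mem_stabOf, buildHom_apply]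
      have h0 : e.1.symm 0 = ((1:G) : G ⧸ K) := by
        rw [Equiv.symm_apply_eq]; exact e.2.symm
      simp only [h0, MulAction.Quotient.smul_mk, smul_eq_mul, mul_one]
      constructor
      · intro h
        have hq : (QuotientGroup.mk g : G ⧸ K) = ((1:G) : G ⧸ K) :=
          e.1.injective (by rw [h, e.2])
        simpa using QuotientGroup.eq.mp hq
      · intro h
        have hq : (QuotientGroup.mk g : G ⧸ K) = ((1:G) : G ⧸ K) :=
          QuotientGroup.eq.mpr (by simpa using h)
        rw [hq, e.2]⟩
  left_inv φ := by
    apply Subtype.ext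
    ext g x
    obtain ⟨c, hc⟩ := φ.2.1 0 x
    have hec : (toPointed K φ).1 (QuotientGroup.mk c) = x := by
      rw [toPointed_apply_mk, hc]
    have hsymm : ((toPointed K φ).1).symm x = QuotientGroup.mk c := by
      rw [Equiv.symm_apply_eq, hec]
    rw [buildHom_apply, hsymm, MulAction.Quotient.smul_mk, smul_eq_mul,
      toPointed_apply_mk, map_mul, Equiv.Perm.mul_apply, hc]
  right_inv e := by
    apply Subtype.ext
    ext x
    obtain ⟨c, rfl⟩ := QuotientGroup.mk_surjective x
    rw [toPointed_apply_mk, buildHom_apply]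
    have h0 : e.1.symm 0 = ((1:G) : G ⧸ K) := by
      rw [Equiv.symm_apply_eq]; exact e.2.symm
    rw [h0, MulAction.Quotient.smul_mk, smul_eq_mul, mul_one]
end StabCorr

section Count
variable {r : ℕ} [NeZero r] (K : Subgroup G)

lemma isTransHom_buildHom (e : {e : G ⧸ K ≃ Fin r // e ((1 : G) : G ⧸ K) = 0}) :
    IsTransHom (buildHom K e.1) := ((fiberEquivPointed K).symm e).2.1

lemma stabOf_buildHom (e : {e : G ⧸ K ≃ Fin r // e ((1 : G) : G ⧸ K) = 0}) :
    stabOf (buildHom K e.1) = K := ((fiberEquivPointed K).symm e).2.2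

lemma index_stabOf {φ : G →* Equiv.Perm (Fin r)} (h : IsTransHom φ) :
    (stabOf φ).index = r := by
  have e := (toPointed (stabOf φ) ⟨φ, h, rfl⟩).1
  rw [Subgroup.index_eq_card, Nat.card_congr e]
  simp

lemma exists_pointed {K : Subgroup G} (hK : K.index = r) :
    Nonempty {e : G ⧸ K ≃ Fin r // e ((1 : G) : G ⧸ K) = 0} := by
  have hfin : Finite (G ⧸ K) := by
    apply Nat.finite_of_card_ne_zero
    rw [← Subgroup.index_eq_card, hK]
    exact NeZero.ne r
  cases nonempty_fintype (G ⧸ K)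
  have hc : Fintype.card (G ⧸ K) = r := by
    rw [← Nat.card_eq_fintype_card, ← Subgroup.index_eq_card, hK]
  classical
  refine ⟨⟨(Fintype.equivFinOfCardEq hc).trans
    (Equiv.swap ((Fintype.equivFinOfCardEq hc) ((1 : G) : G ⧸ K)) 0), ?_⟩⟩
  simp

lemma card_fiber_stabOf {K : Subgroup G} (hK : K.index = r) :
    Nat.card {φ : G →* Equiv.Perm (Fin r) // IsTransHom φ ∧ stabOf φ = K} =
      (r - 1).factorial := by
  have hfin : Finite (G ⧸ K) := by
    apply Nat.finite_of_card_ne_zero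
    rw [← Subgroup.index_eq_card, hK]
    exact NeZero.ne r
  rw [Nat.card_congr (fiberEquivPointed K)]
  exact card_pointed_equiv (by rw [← Subgroup.index_eq_card, hK]) (by simp) _ _
end Count

lemma transCount_eq_card_subgroups (r : ℕ) [NeZero r] :
    transCount (FreeGroup (Fin 2)) r =
      Nat.card {K : Subgroup (FreeGroup (Fin 2)) // K.index = r} * (r - 1).factorial := by
  classical
  set G2 := FreeGroup (Fin 2)
  -- the base is finite
  have hBfin : Finite {K : Subgroup G2 // K.index = r} := by
    have hinj : Function.Injective
        (fun K : {K : Subgroup G2 // K.index = r} =>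
          buildHom K.1 (Classical.choice (exists_pointed K.2)).1) := by
      intro K K' h
      apply Subtype.ext
      simpa only [stabOf_buildHom] using congrArg stabOf h
    exact Finite.of_injective _ hinj
  haveI := Fintype.ofFinite {K : Subgroup G2 // K.index = r}
  -- sum over fibers of stabOf
  have hsum := card_eq_sum_card_fiber
    (fun φ : {φ : G2 →* Equiv.Perm (Fin r) // IsTransHom φ} =>
      (⟨stabOf φ.1, index_stabOf φ.2⟩ : {K : Subgroup G2 // K.index = r}))
  rw [transCount, hsum]
  refine (Finset.sum_congr rfl fun K _ => ?_).trans
    (by rw [Finset.sum_const, Finset.card_univ, smul_eq_mul, Nat.card_eq_fintype_card])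
  rw [← card_fiber_stabOf K.2]
  apply Nat.card_congr
  refine (Equiv.subtypeEquivRight ?_).trans
    (Equiv.subtypeSubtypeEquivSubtypeInter IsTransHom (fun φ => stabOf φ = K.1))
  intro φ
  rw [Subtype.ext_iff]

section Split
variable (p : α → Prop) [DecidablePred p]

def IsInv (φ : G →* Equiv.Perm α) : Prop := ∀ (g : G) (x : α), p x → p (φ g x)

def IsTransOn (φ : G →* Equiv.Perm α) : Prop :=
  ∀ x y : α, p x → p y → ∃ g : G, φ g x = y

lemma isInv_iff {φ : G →* Equiv.Perm α} (h : IsInv p φ) (g : G) (x : α) :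
    p x ↔ p (φ g x) := by
  refine ⟨h g x, fun hx => ?_⟩
  have := h g⁻¹ _ hx
  rwa [map_inv, Equiv.Perm.inv_def, Equiv.symm_apply_apply] at this

def restrictHom (φ : G →* Equiv.Perm α) (h : IsInv p φ) : G →* Equiv.Perm {x // p x} where
  toFun g := (φ g).subtypePerm (fun x => (isInv_iff p h g x).symm)
  map_one' := by
    ext x
    simp [Equiv.Perm.subtypePerm_apply]
  map_mul' g g' := by
    ext x
    simp [Equiv.Perm.subtypePerm_apply]
    rfl

@[simp] lemma restrictHom_apply (φ : G →* Equiv.Perm α) (h : IsInv p φ) (g : G)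
    (x : {x // p x}) : (restrictHom p φ h g x : α) = φ g x := rfl

lemma isInv_compl {φ : G →* Equiv.Perm α} (h : IsInv p φ) :
    IsInv (fun x => ¬ p x) φ := fun g x hx hpx => hx ((isInv_iff p h g x).mpr hpx)

def joinHom (ψ : G →* Equiv.Perm {x // p x}) (χ : G →* Equiv.Perm {x // ¬ p x}) :
    G →* Equiv.Perm α where
  toFun g := Equiv.Perm.subtypeCongr (ψ g) (χ g)
  map_one' := by
    simp [map_one]
    exact Equiv.Perm.subtypeCongr.refl
  map_mul' g g' := by
    simp only [map_mul]
    rw [Equiv.Perm.mul_def, Equiv.Perm.mul_def, Equiv.Perm.mul_def,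
      Equiv.Perm.subtypeCongr.trans]

@[simp] lemma joinHom_apply_left (ψ : G →* Equiv.Perm {x // p x})
    (χ : G →* Equiv.Perm {x // ¬ p x}) (g : G) {x : α} (hx : p x) :
    joinHom p ψ χ g x = (ψ g ⟨x, hx⟩ : α) :=
  Equiv.Perm.subtypeCongr.left_apply _ _ hx

@[simp] lemma joinHom_apply_right (ψ : G →* Equiv.Perm {x // p x})
    (χ : G →* Equiv.Perm {x // ¬ p x}) (g : G) {x : α} (hx : ¬ p x) :
    joinHom p ψ χ g x = (χ g ⟨x, hx⟩ : α) :=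
  Equiv.Perm.subtypeCongr.right_apply _ _ hx

lemma isInv_joinHom (ψ : G →* Equiv.Perm {x // p x}) (χ : G →* Equiv.Perm {x // ¬ p x}) :
    IsInv p (joinHom p ψ χ) := by
  intro g x hx
  rw [joinHom_apply_left p ψ χ g hx]
  exact (ψ g ⟨x, hx⟩).2

def splitEquiv :
    {φ : G →* Equiv.Perm α // IsInv p φ ∧ IsTransOn p φ} ≃
      ({ψ : G →* Equiv.Perm {x // p x} // IsTransHom ψ} × (G →* Equiv.Perm {x // ¬ p x})) where
  toFun φ :=
    (⟨restrictHom p φ.1 φ.2.1, by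
        rintro ⟨x, hx⟩ ⟨y, hy⟩
        obtain ⟨g, hg⟩ := φ.2.2 x y hx hy
        exact ⟨g, Subtype.ext (by simpa using hg)⟩⟩,
      restrictHom (fun x => ¬ p x) φ.1 (isInv_compl p φ.2.1))
  invFun ψχ := ⟨joinHom p ψχ.1.1 ψχ.2, isInv_joinHom p _ _, by
    intro x y hx hy
    obtain ⟨g, hg⟩ := ψχ.1.2 ⟨x, hx⟩ ⟨y, hy⟩
    refine ⟨g, ?_⟩
    rw [joinHom_apply_left p _ _ g hx, hg]⟩
  left_inv φ := by
    apply Subtype.ext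
    ext g x
    by_cases hx : p x
    · rw [joinHom_apply_left _ _ _ _ hx]
      simp
    · rw [joinHom_apply_right _ _ _ _ hx]
      simp
  right_inv ψχ := by
    refine Prod.ext (Subtype.ext ?_) ?_
    · ext g x
      have : (restrictHom p (joinHom p ψχ.1.1 ψχ.2) (isInv_joinHom p _ _) g x : α)
          = joinHom p ψχ.1.1 ψχ.2 g x := rfl
      show (restrictHom p (joinHom p ψχ.1.1 ψχ.2) (isInv_joinHom p _ _) g x : α)
          = (ψχ.1.1 g x : α)
      rw [this, joinHom_apply_left p _ _ g x.2]
    · ext g x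
      show (restrictHom (fun x => ¬ p x) (joinHom p ψχ.1.1 ψχ.2)
          (isInv_compl p (isInv_joinHom p _ _)) g x : α) = (ψχ.2 g x : α)
      rw [restrictHom_apply, joinHom_apply_right p _ _ g x.2]
end Split

section Orbit
variable {r : ℕ} [NeZero r]

open scoped Classical in
noncomputable def orbFinset (φ : G →* Equiv.Perm (Fin r)) : Finset (Fin r) :=
  Finset.univ.filter (fun x => ∃ g : G, φ g 0 = x)

lemma mem_orbFinset {φ : G →* Equiv.Perm (Fin r)} {x : Fin r} :
    x ∈ orbFinset φ ↔ ∃ g : G, φ g 0 = x := by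
  simp [orbFinset]

lemma zero_mem_orbFinset (φ : G →* Equiv.Perm (Fin r)) : (0 : Fin r) ∈ orbFinset φ :=
  mem_orbFinset.mpr ⟨1, by simp⟩

lemma orbFinset_eq_iff {φ : G →* Equiv.Perm (Fin r)} {S : Finset (Fin r)}
    (hS : (0 : Fin r) ∈ S) :
    orbFinset φ = S ↔ IsInv (· ∈ S) φ ∧ IsTransOn (· ∈ S) φ := by
  constructor
  · rintro rfl
    constructor
    · intro g x hx
      obtain ⟨h, rfl⟩ := mem_orbFinset.mp hx
      exact mem_orbFinset.mpr ⟨g * h, by rw [map_mul]; rfl⟩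
    · intro x y hx hy
      obtain ⟨h, rfl⟩ := mem_orbFinset.mp hx
      obtain ⟨h', rfl⟩ := mem_orbFinset.mp hy
      refine ⟨h' * h⁻¹, ?_⟩
      rw [map_mul, Equiv.Perm.mul_apply, map_inv, Equiv.Perm.inv_def, Equiv.symm_apply_apply]
  · rintro ⟨h1, h2⟩
    ext x
    rw [mem_orbFinset]
    constructor
    · rintro ⟨g, rfl⟩
      exact h1 g 0 hS
    · intro hx
      exact h2 0 x hS hx
end Orbit

instance finiteHomF2 (H : Type) [Group H] [Finite H] :
    Finite (FreeGroup (Fin 2) →* H) :=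
  Finite.of_equiv _ (FreeGroup.lift : (Fin 2 → H) ≃ _)

lemma card_homF2' (β : Type) [Fintype β] [DecidableEq β] :
    Nat.card (FreeGroup (Fin 2) →* Equiv.Perm β) = (Fintype.card β).factorial ^ 2 := by
  rw [Nat.card_congr (FreeGroup.lift : (Fin 2 → Equiv.Perm β) ≃ _).symm]
  simp [Nat.card_fun, Nat.card_eq_fintype_card, sq, Fintype.card_perm]

lemma card_fiber_orb {r : ℕ} [NeZero r] (S : Finset (Fin r)) (hS : (0 : Fin r) ∈ S) :
    Nat.card {φ : FreeGroup (Fin 2) →* Equiv.Perm (Fin r) // orbFinset φ = S} =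
      transCount (FreeGroup (Fin 2)) S.card * ((r - S.card).factorial) ^ 2 := by
  classical
  rw [Nat.card_congr ((Equiv.subtypeEquivRight
    (fun φ => orbFinset_eq_iff hS)).trans (splitEquiv (· ∈ S)))]
  rw [Nat.card_prod]
  congr 1
  · rw [transCount]
    apply Nat.card_congr
    exact transHomCongr (S.equivFin)
  · rw [card_homF2']
    congr 2
    rw [Fintype.card_subtype_compl]
    simp [Fintype.card_coe]

lemma card_subsets_zero_mem (r k : ℕ) [NeZero r] (hk : 1 ≤ k) :
    ((Finset.univ.filter (fun S : Finset (Fin r) => (0 : Fin r) ∈ S)).filter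
      (fun S => S.card = k)).card = (r - 1).choose (k - 1) := by
  classical
  have : (((Finset.univ : Finset (Fin r)).erase 0).powersetCard (k - 1)).card
      = (r - 1).choose (k - 1) := by
    rw [Finset.card_powersetCard, Finset.card_erase_of_mem (Finset.mem_univ _),
      Finset.card_univ, Fintype.card_fin]
  rw [← this]
  apply Finset.card_bij' (fun S _ => S.erase 0) (fun T _ => insert 0 T)
  · intro S hS
    simp only [Finset.mem_filter, Finset.mem_univ, true_and] at hS
    exact Finset.insert_erase hS.1
  · intro T hT
    rw [Finset.mem_powersetCard] at hT
    have h0 : (0 : Fin r) ∉ T := fun h => by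
      have := hT.1 h
      simp at this
    exact Finset.erase_insert h0
  · intro S hS
    simp only [Finset.mem_filter, Finset.mem_univ, true_and] at hS
    rw [Finset.mem_powersetCard]
    exact ⟨Finset.erase_subset_erase _ (Finset.subset_univ _),
      by rw [Finset.card_erase_of_mem hS.1, hS.2]⟩
  · intro T hT
    rw [Finset.mem_powersetCard] at hT
    have h0 : (0 : Fin r) ∉ T := fun h => by
      have := hT.1 h
      simp at this
    simp only [Finset.mem_filter, Finset.mem_univ, true_and]
    refine ⟨Finset.mem_insert_self _ _, ?_⟩
    rw [Finset.card_insert_of_notMem h0, hT.2, Nat.sub_add_cancel hk]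

lemma hall_sum (r : ℕ) [NeZero r] :
    r.factorial ^ 2 = ∑ k ∈ Finset.Ico 1 (r + 1),
      (r - 1).choose (k - 1) *
        (transCount (FreeGroup (Fin 2)) k * ((r - k).factorial) ^ 2) := by
  classical
  have h1 := card_eq_sum_card_fiber
    (fun φ : FreeGroup (Fin 2) →* Equiv.Perm (Fin r) => orbFinset φ)
  rw [card_homF2 r] at h1
  set A := Finset.univ.filter (fun S : Finset (Fin r) => (0 : Fin r) ∈ S) with hA
  have h2 : r.factorial ^ 2 = ∑ S ∈ A, Nat.card
      {φ : FreeGroup (Fin 2) →* Equiv.Perm (Fin r) // orbFinset φ = S} := by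
    rw [h1, Finset.sum_filter_of_ne]
    intro S _ hne
    obtain ⟨φ⟩ := (Nat.card_ne_zero.mp hne).1
    rw [← φ.2]
    exact zero_mem_orbFinset φ.1
  have h3 : ∀ S ∈ A, Nat.card
      {φ : FreeGroup (Fin 2) →* Equiv.Perm (Fin r) // orbFinset φ = S} =
      transCount (FreeGroup (Fin 2)) S.card * ((r - S.card).factorial) ^ 2 := by
    intro S hS
    rw [hA, Finset.mem_filter] at hS
    exact card_fiber_orb S hS.2
  rw [Finset.sum_congr rfl h3] at h2
  have hmaps : ∀ S ∈ A, S.card ∈ Finset.range (r + 1) := by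
    intro S _
    rw [Finset.mem_range]
    have := Finset.card_le_univ S
    simp only [Finset.card_univ, Fintype.card_fin] at this
    omega
  have h4 := Finset.sum_fiberwise_of_maps_to hmaps
    (fun S => transCount (FreeGroup (Fin 2)) S.card * ((r - S.card).factorial) ^ 2)
  rw [← h4] at h2
  have h5 : ∀ k ∈ Finset.range (r + 1),
      (∑ S ∈ A.filter (fun S => S.card = k),
        transCount (FreeGroup (Fin 2)) S.card * ((r - S.card).factorial) ^ 2) =
      (A.filter (fun S => S.card = k)).card *
        (transCount (FreeGroup (Fin 2)) k * ((r - k).factorial) ^ 2) := by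
    intro k _
    have hpt : ∀ S ∈ A.filter (fun S => S.card = k),
        transCount (FreeGroup (Fin 2)) S.card * ((r - S.card).factorial) ^ 2 =
          transCount (FreeGroup (Fin 2)) k * ((r - k).factorial) ^ 2 := by
      intro S hS
      rw [Finset.mem_filter] at hS
      rw [hS.2]
    rw [Finset.sum_congr rfl hpt, Finset.sum_const, smul_eq_mul]
  rw [Finset.sum_congr rfl h5] at h2
  rw [h2, Finset.range_eq_Ico, Finset.sum_eq_sum_Ico_succ_bot (by omega : 0 < r + 1)]
  have hzero : (A.filter (fun S => S.card = 0)).card = 0 := by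
    rw [Finset.card_eq_zero, Finset.filter_eq_empty_iff]
    intro S hS
    rw [hA, Finset.mem_filter] at hS
    intro hc
    rw [Finset.card_eq_zero] at hc
    subst hc
    simp at hS
  rw [hzero, Nat.zero_mul, zero_add]
  refine Finset.sum_congr rfl (fun k hk => ?_)
  rw [Finset.mem_Ico] at hk
  rw [card_subsets_zero_mem r k hk.1]

/-- The number of subgroups of the free group on two generators of index exactly `r`. -/
noncomputable def numSubgroupsOfIndex (r : ℕ) : ℕ :=
  Nat.card {K : Subgroup (FreeGroup (Fin 2)) // K.index = r}

lemma finite_subgroups_of_index (r : ℕ) [NeZero r] :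
    Finite {K : Subgroup (FreeGroup (Fin 2)) // K.index = r} := by
  classical
  have hinj : Function.Injective
      (fun K : {K : Subgroup (FreeGroup (Fin 2)) // K.index = r} =>
        buildHom K.1 (Classical.choice (exists_pointed K.2)).1) := by
    intro K K' h
    apply Subtype.ext
    simpa only [stabOf_buildHom] using congrArg stabOf h
  exact Finite.of_injective _ hinj

lemma nonempty_subgroups_of_index (r : ℕ) [NeZero r] :
    Nonempty {K : Subgroup (FreeGroup (Fin 2)) // K.index = r} := by
  let f : FreeGroup (Fin 2) →* Multiplicative (ZMod r) :=
    FreeGroup.lift (fun _ => Multiplicative.ofAdd (1 : ZMod r))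
  have hsurj : Function.Surjective f := by
    intro x
    refine ⟨(FreeGroup.of 0) ^ (Multiplicative.toAdd x).val, ?_⟩
    rw [map_pow]
    have h1 : f (FreeGroup.of 0) = Multiplicative.ofAdd (1 : ZMod r) := by
      simp [f]
    rw [h1, ← ofAdd_nsmul, nsmul_eq_mul, mul_one, ZMod.natCast_rightInverse _]
    simp
  refine ⟨⟨f.ker, ?_⟩⟩
  rw [Subgroup.index_ker, MonoidHom.range_eq_top.mpr hsurj]
  rw [Nat.card_congr Subgroup.topEquiv.toEquiv,
    Nat.card_congr (Multiplicative.toAdd (α := ZMod r)), Nat.card_zmod]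

lemma numSubgroups_one : numSubgroupsOfIndex 1 = 1 := by
  haveI : Unique {K : Subgroup (FreeGroup (Fin 2)) // K.index = 1} :=
    { default := ⟨⊤, Subgroup.index_top⟩
      uniq := fun K => Subtype.ext (Subgroup.index_eq_one.mp K.2) }
  exact Nat.card_unique

lemma transCount_eq' (k : ℕ) [NeZero k] :
    transCount (FreeGroup (Fin 2)) k = numSubgroupsOfIndex k * (k - 1).factorial :=
  transCount_eq_card_subgroups k

/-- the Hall recursion in summed form over `ℕ` -/
lemma hall_recursion_nat (r : ℕ) (hr : 1 ≤ r) :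
    r * r.factorial = ∑ k ∈ Finset.Ico 1 (r + 1),
      (r - k).factorial * numSubgroupsOfIndex k := by
  haveI : NeZero r := ⟨by omega⟩
  have h := hall_sum r
  have hterm : ∀ k ∈ Finset.Ico 1 (r + 1),
      (r - 1).choose (k - 1) * (transCount (FreeGroup (Fin 2)) k * ((r - k).factorial) ^ 2) =
        (r - 1).factorial * ((r - k).factorial * numSubgroupsOfIndex k) := by
    intro k hk
    rw [Finset.mem_Ico] at hk
    haveI : NeZero k := ⟨by omega⟩
    have hfac : (r - 1).choose (k - 1) * (k - 1).factorial * ((r - k).factorial)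
        = (r - 1).factorial := by
      have h1 : k - 1 ≤ r - 1 := by omega
      have h2 : (r - 1) - (k - 1) = r - k := by omega
      have := Nat.choose_mul_factorial_mul_factorial h1
      rwa [h2] at this
    rw [transCount_eq' k]
    calc (r - 1).choose (k - 1) *
          (numSubgroupsOfIndex k * (k - 1).factorial * ((r - k).factorial) ^ 2)
        = ((r - 1).choose (k - 1) * (k - 1).factorial * (r - k).factorial) *
            ((r - k).factorial * numSubgroupsOfIndex k) := by ring
      _ = (r - 1).factorial * ((r - k).factorial * numSubgroupsOfIndex k) := by rw [hfac]
  rw [Finset.sum_congr rfl hterm, ← Finset.mul_sum] at h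
  have hlhs : r.factorial ^ 2 = (r - 1).factorial * (r * r.factorial) := by
    obtain ⟨n, rfl⟩ : ∃ n, r = n + 1 := ⟨r - 1, by omega⟩
    simp [Nat.factorial_succ]
    ring
  rw [hlhs] at h
  exact Nat.eq_of_mul_eq_mul_left (Nat.factorial_pos _) h

/-- Marshall Hall's recursion for `F₂`: `N₁ = 1`,
`N_r = r·r! − ∑_{k=1}^{r−1} (r−k)!·N_k`, and `N_r ≥ 1` for all `r ≥ 1`, so `F₂` has
subgroups of every finite index. -/
theorem stmt_19 :
    numSubgroupsOfIndex 1 = 1 ∧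
    (∀ r : ℕ, 1 ≤ r →
      (numSubgroupsOfIndex r : ℤ) =
        (r : ℤ) * Nat.factorial r -
          ∑ k ∈ Finset.Ico 1 r, ((r - k).factorial : ℤ) * numSubgroupsOfIndex k) ∧
    (∀ r : ℕ, 1 ≤ r → 1 ≤ numSubgroupsOfIndex r) := by
  refine ⟨numSubgroups_one, ?_, ?_⟩
  · intro r hr
    have h := hall_recursion_nat r hr
    rw [Finset.sum_Ico_succ_top hr] at h
    have h2 : (r : ℤ) * r.factorial =
        (∑ k ∈ Finset.Ico 1 r, ((r - k).factorial : ℤ) * numSubgroupsOfIndex k) +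
          numSubgroupsOfIndex r := by
      have := congrArg (Nat.cast : ℕ → ℤ) h
      push_cast at this
      simpa using this
    linarith
  · intro r hr
    haveI : NeZero r := ⟨by omega⟩
    haveI := finite_subgroups_of_index r
    haveI := nonempty_subgroups_of_index r
    exact Nat.card_pos
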